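/- Let b + 2 ≤ a ≤ 2b (so a > b > a - b - 1 ≥ 1). Then the values of the irreducible characters of S_{2a} indexed by (a, b+2, 1^{a-b-2}) and by (a, a-b+1, 1^{b-1}) at the conjugacy class of cycle type (a, b, a-b-1, 1) both equal 0. -/

import Mathlib

/-- The beta-set (set of first-column hook lengths) of a partition given as a
weakly decreasing list of parts. -/
def betaSet (l : List ℕ) : List ℕ :=
  (l.zipIdx.map Prod.swap).map (fun p => p.2 + (l.length - 1 - p.1))

/-- Recover a partition (weakly decreasing list of positive parts) from a
list of distinct beta-numbers. -/
def fromBeta (b : List ℕ) : List ℕ :=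
  let s := List.insertionSort (· ≥ ·) b
  ((s.zipIdx.map Prod.swap).map (fun p => p.2 - (s.length - 1 - p.1))).filter (fun x => x ≠ 0)

/-- `MN β γ` is the value of the irreducible character of the symmetric group
indexed by the partition `β` at the conjugacy class of cycle type `γ`,
computed via the Murnaghan–Nakayama rule (phrased in terms of beta-numbers:
removing a rim hook of length `q` replaces a beta-number `x` by `x - q`,
the sign being `(-1)` to the number of beta-numbers strictly between
`x - q` and `x`, i.e. the leg length of the hook). -/
def MN : List ℕ → List ℕ → ℤ
  | β, [] => if β = [] then 1 else 0
  | β, q :: γ =>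
      ((betaSet β).map (fun x =>
        if q ≤ x ∧ x - q ∉ betaSet β then
          (-1) ^ ((betaSet β).filter (fun y => x - q < y ∧ y < x)).length *
            MN (fromBeta ((x - q) :: (betaSet β).erase x)) γ
        else 0)).sum

/-- `l` is a partition of `m`: a weakly decreasing list of positive parts
summing to `m`. -/
def IsPartition (l : List ℕ) (m : ℕ) : Prop :=
  l.Pairwise (· ≥ ·) ∧ (∀ i ∈ l, 0 < i) ∧ l.sum = m

/-- The conjugate (transpose) partition: `(conjugate l)_i = #{j : l_j > i}`. -/
def conjugate (l : List ℕ) : List ℕ :=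
  (List.range (l.foldr max 0)).map (fun i => (l.filter (fun p => i < p)).length)

/-- `rv k = [k, k-1, ..., 1]`. -/
def rv : ℕ → List ℕ
  | 0 => []
  | k+1 => (k+1) :: rv k

/-- partition parts from a sorted beta list. -/
def gg : List ℕ → List ℕ
  | [] => []
  | x :: xs => (x - xs.length) :: gg xs

lemma rv_length (k : ℕ) : (rv k).length = k := by
  induction k with
  | zero => rfl
  | succ k ih => simp [rv, ih]

lemma mem_rv {x k : ℕ} : x ∈ rv k ↔ 1 ≤ x ∧ x ≤ k := by
  induction k with
  | zero => simp [rv]; omega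
  | succ k ih => simp [rv, ih]; omega

lemma sorted_rv (k : ℕ) : (rv k).Pairwise (· ≥ ·) := by
  induction k with
  | zero => simp [rv]
  | succ k ih =>
    simp only [rv, List.pairwise_cons]
    exact ⟨fun b hb => by have := mem_rv.1 hb; omega, ih⟩

lemma sorted_rv0 (k : ℕ) : (rv k ++ [0]).Pairwise (· ≥ ·) := by
  induction k with
  | zero => simp [rv]
  | succ k ih =>
    simp only [rv, List.cons_append, List.pairwise_cons]
    refine ⟨fun b hb => ?_, ih⟩
    rcases List.mem_append.1 hb with h | h
    · have := mem_rv.1 h; omega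
    · simp at h; omega

lemma enumFrom_map_shift (h : ℕ → ℕ → ℕ) :
    ∀ (xs : List ℕ) (n c : ℕ),
      (xs.zipIdx (n+1)).map (fun p => h p.1 (c - p.2)) =
      (xs.zipIdx n).map (fun p => h p.1 (c - 1 - p.2)) := by
  intro xs
  induction xs with
  | nil => intro n c; simp
  | cons a l ih =>
    intro n c
    simp only [List.zipIdx_cons, List.map_cons]
    rw [ih (n+1) c]
    congr 2
    omega

lemma enumMap_cons (h : ℕ → ℕ → ℕ) (x : ℕ) (xs : List ℕ) :
    (((x :: xs).zipIdx.map Prod.swap).map (fun p => h p.2 ((x :: xs).length - 1 - p.1))) =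
      h x xs.length :: (xs.zipIdx.map Prod.swap).map (fun p => h p.2 (xs.length - 1 - p.1)) := by
  simp only [List.map_map, List.zipIdx_cons, List.map_cons, List.length_cons, Function.comp_def,
    Prod.fst_swap, Prod.snd_swap, Prod.swap_prod_mk, Nat.add_sub_cancel, Nat.sub_zero]
  have h2 := enumFrom_map_shift h xs 0 xs.length
  rw [h2]

lemma betaSet_cons (x : ℕ) (xs : List ℕ) :
    betaSet (x :: xs) = (x + xs.length) :: betaSet xs := by
  unfold betaSet
  exact enumMap_cons (fun v m => v + m) x xs

lemma betaSet_rep0 (k : ℕ) : betaSet (List.replicate k 1) = rv k := by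
  induction k with
  | zero => simp [betaSet, rv]
  | succ k ih =>
    rw [List.replicate_succ, betaSet_cons, ih]
    simp [rv, List.length_replicate, Nat.add_comm]

lemma betaSet_rep1 (x k : ℕ) : betaSet (x :: List.replicate k 1) = (x + k) :: rv k := by
  rw [betaSet_cons, betaSet_rep0, List.length_replicate]

lemma betaSet_rep2 (x y k : ℕ) :
    betaSet (x :: y :: List.replicate k 1) = (x + (k+1)) :: (y + k) :: rv k := by
  rw [betaSet_cons, betaSet_rep1]
  simp

lemma betaSet_single (x : ℕ) : betaSet [x] = [x] := by
  rw [betaSet_cons]; simp [betaSet]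

lemma gg_eq (s : List ℕ) :
    (s.zipIdx.map Prod.swap).map (fun p => p.2 - (s.length - 1 - p.1)) = gg s := by
  induction s with
  | nil => rfl
  | cons x xs ih => rw [enumMap_cons (fun v m => v - m) x xs, ih]; rfl

lemma fromBeta_eq {l s : List ℕ} (hp : l.Perm s) (hs : s.Pairwise (· ≥ ·)) :
    fromBeta l = (gg s).filter (fun x => x ≠ 0) := by
  have hsort : List.insertionSort (· ≥ ·) l = s :=
    List.Perm.eq_of_pairwise (fun a b _ _ h1 h2 => le_antisymm h2 h1)
      (List.pairwise_insertionSort _ l) hs ((List.perm_insertionSort _ l).trans hp)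
  unfold fromBeta
  simp only [hsort, gg_eq]

lemma gg_rv (k : ℕ) : gg (rv k) = List.replicate k 1 := by
  induction k with
  | zero => rfl
  | succ k ih => simp [rv, gg, rv_length, ih, List.replicate_succ]

lemma gg_rv0 (k : ℕ) : gg (rv k ++ [0]) = List.replicate (k+1) 0 := by
  induction k with
  | zero => rfl
  | succ k ih =>
    have hl : (rv k ++ [0]).length = k + 1 := by simp [rv_length]
    rw [show rv (k+1) ++ [0] = (k+1) :: (rv k ++ [0]) from rfl]
    simp only [gg]
    rw [hl, ih, Nat.sub_self]
    simp [List.replicate_succ]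

lemma filter_rep1 (k : ℕ) :
    (List.replicate k 1).filter (fun x => x ≠ 0) = List.replicate k 1 := by
  rw [List.filter_eq_self]
  intro a ha
  have := List.eq_of_mem_replicate ha
  simp [this]

lemma filter_rep0 (k : ℕ) :
    (List.replicate k 0).filter (fun x => x ≠ 0) = [] := by
  rw [List.filter_eq_nil_iff]
  intro a ha
  have := List.eq_of_mem_replicate ha
  simp [this]

lemma tail_zero (k q : ℕ) (hk : k < q) (B : List ℕ) (γ : List ℕ) :
    ((rv k).map (fun x =>
        if q ≤ x ∧ x - q ∉ B then
          (-1) ^ (B.filter (fun y => x - q < y ∧ y < x)).length *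
            MN (fromBeta ((x - q) :: B.erase x)) γ
        else 0)).sum = 0 := by
  apply List.sum_eq_zero
  intro z hz
  simp only [List.mem_map] at hz
  obtain ⟨x, hx, rfl⟩ := hz
  have hx2 := mem_rv.1 hx
  rw [if_neg]
  rintro ⟨h, -⟩
  omega

lemma MN_nilnil : MN [] [] = 1 := rfl

lemma row1 (q m : ℕ) (hq : 1 ≤ q) (hm : 1 ≤ m) (γ : List ℕ) :
    MN [q + m] (q :: γ) = MN [m] γ := by
  rw [MN, betaSet_single]
  simp only [List.map_cons, List.map_nil, List.sum_cons, List.sum_nil]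
  rw [Nat.add_sub_cancel_left]
  rw [if_pos ⟨by omega, by simp <;> omega⟩]
  rw [List.erase_cons_head]
  rw [List.filter_cons_of_neg (by simp <;> omega), List.filter_nil]
  rw [fromBeta_eq (List.Perm.refl [m]) (List.pairwise_singleton _ m)]
  simp only [gg, List.length_nil, Nat.sub_zero]
  rw [List.filter_cons_of_pos (by simp <;> omega), List.filter_nil]
  simp

lemma row0 (q : ℕ) (hq : 1 ≤ q) : MN [q] [q] = 1 := by
  rw [MN, betaSet_single]
  simp only [List.map_cons, List.map_nil, List.sum_cons, List.sum_nil]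
  rw [Nat.sub_self]
  rw [if_pos ⟨by omega, by simp <;> omega⟩]
  rw [List.erase_cons_head]
  rw [List.filter_cons_of_neg (by simp <;> omega), List.filter_nil]
  rw [fromBeta_eq (List.Perm.refl [0]) (List.pairwise_singleton _ 0)]
  simp only [gg, List.length_nil, Nat.sub_zero]
  rw [List.filter_cons_of_neg (by simp), List.filter_nil]
  simp [MN]

lemma gg_cons (x : ℕ) (xs : List ℕ) : gg (x :: xs) = (x - xs.length) :: gg xs := rfl

lemma sorted_cons_rv {x k : ℕ} (h : k ≤ x) : (x :: rv k).Pairwise (· ≥ ·) := by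
  rw [List.pairwise_cons]
  exact ⟨fun b hb => by have := mem_rv.1 hb; omega, sorted_rv k⟩

lemma sorted_cons_cons_rv {x y k : ℕ} (hxy : y ≤ x) (h : k ≤ y) :
    (x :: y :: rv k).Pairwise (· ≥ ·) := by
  rw [List.pairwise_cons]
  refine ⟨fun b hb => ?_, sorted_cons_rv h⟩
  rcases List.mem_cons.1 hb with rfl | hb
  · omega
  · have := mem_rv.1 hb; omega

lemma sorted_cons_rv0 {x k : ℕ} (h : k ≤ x) : (x :: (rv k ++ [0])).Pairwise (· ≥ ·) := by
  rw [List.pairwise_cons]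
  refine ⟨fun b hb => ?_, sorted_rv0 k⟩
  rcases List.mem_append.1 hb with hb | hb
  · have := mem_rv.1 hb; omega
  · simp at hb; omega

lemma perm_zero (x : ℕ) (l : List ℕ) : (0 :: x :: l).Perm (x :: (l ++ [0])) := by
  have h1 : (0 :: x :: l).Perm ((x :: l) ++ [0]) :=
    (List.perm_append_singleton 0 (x :: l)).symm
  simpa using h1

/-- The column `(1^(e+2))` at `(e+1) :: γ`. -/
lemma colL (e : ℕ) (γ : List ℕ) :
    MN (List.replicate (e+2) 1) ((e+1) :: γ) = (-1)^e * MN [1] γ := by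
  rw [MN, betaSet_rep0]
  rw [show rv (e+2) = (e+2) :: (e+1) :: rv e from rfl]
  simp only [List.map_cons, List.sum_cons]
  rw [show e + 2 - (e + 1) = 1 from by omega, Nat.sub_self]
  rw [if_neg (by rintro ⟨-, h⟩; exact h (by simp [mem_rv] <;> omega))]
  rw [if_pos ⟨by omega, by simp [mem_rv] <;> omega⟩]
  rw [List.erase_cons_tail (by simp <;> omega), List.erase_cons_head]
  rw [List.filter_cons_of_neg (by simp <;> omega),
      List.filter_cons_of_neg (by simp <;> omega),
      List.filter_eq_self.mpr (fun a ha => by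
        have := mem_rv.1 ha; simp <;> omega)]
  rw [fromBeta_eq (perm_zero (e+2) (rv e)) (sorted_cons_rv0 (by omega))]
  rw [gg_cons]
  rw [gg_rv0, show ((rv e ++ [0]) : List ℕ).length = e + 1 from by simp [rv_length],
      show e + 2 - (e + 1) = 1 from by omega]
  rw [List.filter_cons_of_pos (by simp), filter_rep0]
  rw [tail_zero e (e+1) (by omega)]
  simp [rv_length]

/-- Hook `(b+1, 1^(e+1))` at `b :: γ` with `e + 2 ≤ b`. -/
lemma hookL1 (e b : ℕ) (hb : e + 2 ≤ b) (γ : List ℕ) :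
    MN ((b+1) :: List.replicate (e+1) 1) (b :: γ) = MN (List.replicate (e+2) 1) γ := by
  rw [MN, betaSet_rep1]
  rw [show rv (e+1) = (e+1) :: rv e from rfl]
  simp only [List.map_cons, List.sum_cons]
  rw [show b + 1 + (e+1) - b = e + 2 from by omega]
  rw [if_pos ⟨by omega, by simp [mem_rv] <;> omega⟩]
  rw [if_neg (by rintro ⟨h, -⟩; omega)]
  rw [List.erase_cons_head]
  rw [List.filter_cons_of_neg (by simp <;> omega),
      List.filter_cons_of_neg (by simp <;> omega),
      List.filter_eq_nil_iff.mpr (fun a ha => by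
        have := mem_rv.1 ha; simp <;> omega)]
  rw [fromBeta_eq (List.Perm.refl ((e+2) :: (e+1) :: rv e))
        (sorted_cons_cons_rv (by omega) (by omega))]
  rw [show gg ((e+2) :: (e+1) :: rv e) =
        ((e+2) - ((e+1) :: rv e).length) :: gg ((e+1) :: rv e) from rfl]
  rw [show ((e+1) :: rv e : List ℕ) = rv (e+1) from rfl, gg_rv]
  rw [show (e + 2) - (rv (e+1)).length = 1 from by simp [rv_length]]
  rw [show (1 : ℕ) :: List.replicate (e+1) 1 = List.replicate (e+2) 1 from rfl]
  rw [filter_rep1]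
  rw [tail_zero e b (by omega)]
  simp

/-- Hook `(e+2, 1^(e+f+2))` at `(e+f+2) :: γ`. -/
lemma hookL2 (e f : ℕ) (γ : List ℕ) :
    MN ((e+2) :: List.replicate (e+f+2) 1) ((e+f+2) :: γ) =
      (-1)^(e+f+1) * MN [e+2] γ := by
  rw [MN, betaSet_rep1]
  rw [show rv (e+f+2) = (e+f+2) :: rv (e+f+1) from rfl]
  simp only [List.map_cons, List.sum_cons]
  rw [show e + 2 + (e+f+2) - (e+f+2) = e + 2 from by omega, Nat.sub_self]
  rw [if_neg (by rintro ⟨-, h⟩; exact h (by simp [mem_rv] <;> omega))]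
  rw [if_pos ⟨by omega, by simp [mem_rv] <;> omega⟩]
  rw [List.erase_cons_tail (by simp <;> omega), List.erase_cons_head]
  rw [List.filter_cons_of_neg (by simp <;> omega),
      List.filter_cons_of_neg (by simp <;> omega),
      List.filter_eq_self.mpr (fun a ha => by
        have := mem_rv.1 ha; simp <;> omega)]
  rw [fromBeta_eq (perm_zero (e+2+(e+f+2)) (rv (e+f+1))) (sorted_cons_rv0 (by omega))]
  rw [gg_cons]
  rw [gg_rv0, show ((rv (e+f+1) ++ [0]) : List ℕ).length = e + f + 2 from by simp [rv_length],
      show e + 2 + (e+f+2) - (e + f + 2) = e + 2 from by omega]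
  rw [List.filter_cons_of_pos (by simp), filter_rep0]
  rw [tail_zero (e+f+1) (e+f+2) (by omega)]
  simp [rv_length]

lemma main1 (e f : ℕ) :
    MN ((2*e+f+4) :: (e+f+4) :: List.replicate e 1) [2*e+f+4, e+f+2, e+1, 1] = 0 := by
  rw [MN, betaSet_rep2]
  simp only [List.map_cons, List.sum_cons]
  rw [show 2*e+f+4 + (e+1) - (2*e+f+4) = e + 1 from by omega,
      show e+f+4+e - (2*e+f+4) = 0 from by omega]
  have hc1 : 2*e+f+4 ≤ 2*e+f+4 + (e+1) ∧
      (e+1) ∉ (2*e+f+4 + (e+1)) :: (e+f+4+e) :: rv e :=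
    ⟨by omega, by simp [mem_rv] <;> omega⟩
  have hc2 : 2*e+f+4 ≤ e+f+4+e ∧
      (0:ℕ) ∉ (2*e+f+4 + (e+1)) :: (e+f+4+e) :: rv e :=
    ⟨by omega, by simp [mem_rv] <;> omega⟩
  rw [if_pos hc1, if_pos hc2]
  have hF1 : List.filter (fun y => decide (e + 1 < y ∧ y < 2*e+f+4 + (e+1)))
      ((2*e+f+4 + (e+1)) :: (e+f+4+e) :: rv e) = [e+f+4+e] := by
    rw [List.filter_cons_of_neg (by simp <;> omega),
        List.filter_cons_of_pos (by simp <;> omega),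
        List.filter_eq_nil_iff.mpr (fun a ha => by have := mem_rv.1 ha; simp <;> omega)]
  have hF2 : List.filter (fun y => decide (0 < y ∧ y < e+f+4+e))
      ((2*e+f+4 + (e+1)) :: (e+f+4+e) :: rv e) = rv e := by
    rw [List.filter_cons_of_neg (by simp <;> omega),
        List.filter_cons_of_neg (by simp <;> omega),
        List.filter_eq_self.mpr (fun a ha => by have := mem_rv.1 ha; simp <;> omega)]
  rw [hF1, hF2]
  rw [List.erase_cons_head]
  rw [List.erase_cons_tail (by simp <;> omega), List.erase_cons_head]
  have hFB1 : fromBeta ((e+1) :: (e+f+4+e) :: rv e) =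
      (e+f+2+1) :: List.replicate (e+1) 1 := by
    rw [fromBeta_eq (List.Perm.swap (e+f+4+e) (e+1) (rv e))
          (sorted_cons_cons_rv (by omega) (by omega))]
    rw [show ((e+1) :: rv e : List ℕ) = rv (e+1) from rfl]
    rw [gg_cons, gg_rv, rv_length,
        show e+f+4+e - (e+1) = e+f+2+1 from by omega]
    rw [List.filter_cons_of_pos (by simp), filter_rep1]
  have hFB2 : fromBeta (0 :: (2*e+f+4 + (e+1)) :: rv e) = [2*e+f+4] := by
    rw [fromBeta_eq (perm_zero _ _) (sorted_cons_rv0 (by omega))]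
    rw [gg_cons, gg_rv0, show ((rv e ++ [0]) : List ℕ).length = e+1 from by simp [rv_length],
        show 2*e+f+4 + (e+1) - (e+1) = 2*e+f+4 from by omega]
    rw [List.filter_cons_of_pos (by simp <;> omega), filter_rep0]
  rw [hFB1, hFB2, tail_zero e (2*e+f+4) (by omega)]
  rw [hookL1 e (e+f+2) (by omega), colL e [1], row0 1 (by omega)]
  rw [show (2*e+f+4 : ℕ) = (e+f+2) + (e+2) from by ring,
      row1 (e+f+2) (e+2) (by omega) (by omega),
      show (e+2 : ℕ) = (e+1) + 1 from by ring,
      row1 (e+1) 1 (by omega) (by omega), row0 1 (by omega)]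
  simp [rv_length]

lemma main2 (e f : ℕ) :
    MN ((2*e+f+4) :: (e+3) :: List.replicate (e+f+1) 1) [2*e+f+4, e+f+2, e+1, 1] = 0 := by
  rw [MN, betaSet_rep2]
  simp only [List.map_cons, List.sum_cons]
  rw [show 2*e+f+4 + (e+f+1+1) - (2*e+f+4) = e+f+2 from by omega,
      show e+3+(e+f+1) - (2*e+f+4) = 0 from by omega]
  have hc1 : 2*e+f+4 ≤ 2*e+f+4 + (e+f+1+1) ∧
      (e+f+2) ∉ (2*e+f+4 + (e+f+1+1)) :: (e+3+(e+f+1)) :: rv (e+f+1) :=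
    ⟨by omega, by simp [mem_rv] <;> omega⟩
  have hc2 : 2*e+f+4 ≤ e+3+(e+f+1) ∧
      (0:ℕ) ∉ (2*e+f+4 + (e+f+1+1)) :: (e+3+(e+f+1)) :: rv (e+f+1) :=
    ⟨by omega, by simp [mem_rv] <;> omega⟩
  rw [if_pos hc1, if_pos hc2]
  have hF1 : List.filter (fun y => decide (e+f+2 < y ∧ y < 2*e+f+4 + (e+f+1+1)))
      ((2*e+f+4 + (e+f+1+1)) :: (e+3+(e+f+1)) :: rv (e+f+1)) = [e+3+(e+f+1)] := by
    rw [List.filter_cons_of_neg (by simp <;> omega),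
        List.filter_cons_of_pos (by simp <;> omega),
        List.filter_eq_nil_iff.mpr (fun a ha => by have := mem_rv.1 ha; simp <;> omega)]
  have hF2 : List.filter (fun y => decide (0 < y ∧ y < e+3+(e+f+1)))
      ((2*e+f+4 + (e+f+1+1)) :: (e+3+(e+f+1)) :: rv (e+f+1)) = rv (e+f+1) := by
    rw [List.filter_cons_of_neg (by simp <;> omega),
        List.filter_cons_of_neg (by simp <;> omega),
        List.filter_eq_self.mpr (fun a ha => by have := mem_rv.1 ha; simp <;> omega)]
  rw [hF1, hF2]
  rw [List.erase_cons_head]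
  rw [List.erase_cons_tail (by simp <;> omega), List.erase_cons_head]
  have hFB1 : fromBeta ((e+f+2) :: (e+3+(e+f+1)) :: rv (e+f+1)) =
      (e+2) :: List.replicate (e+f+2) 1 := by
    rw [fromBeta_eq (List.Perm.swap (e+3+(e+f+1)) (e+f+2) (rv (e+f+1)))
          (sorted_cons_cons_rv (by omega) (by omega))]
    rw [show ((e+f+2) :: rv (e+f+1) : List ℕ) = rv (e+f+2) from rfl]
    rw [gg_cons, gg_rv, rv_length,
        show e+3+(e+f+1) - (e+f+2) = e+2 from by omega]
    rw [List.filter_cons_of_pos (by simp), filter_rep1]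
  have hFB2 : fromBeta (0 :: (2*e+f+4 + (e+f+1+1)) :: rv (e+f+1)) = [2*e+f+4] := by
    rw [fromBeta_eq (perm_zero _ _) (sorted_cons_rv0 (by omega))]
    rw [gg_cons, gg_rv0,
        show ((rv (e+f+1) ++ [0]) : List ℕ).length = e+f+2 from by simp [rv_length],
        show 2*e+f+4 + (e+f+1+1) - (e+f+2) = 2*e+f+4 from by omega]
    rw [List.filter_cons_of_pos (by simp <;> omega), filter_rep0]
  rw [hFB1, hFB2, tail_zero (e+f+1) (2*e+f+4) (by omega)]
  rw [hookL2 e f [e+1, 1]]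
  rw [show (2*e+f+4 : ℕ) = (e+f+2) + (e+2) from by ring,
      row1 (e+f+2) (e+2) (by omega) (by omega),
      show (e+2 : ℕ) = (e+1) + 1 from by ring,
      row1 (e+1) 1 (by omega) (by omega), row0 1 (by omega)]
  simp [rv_length]

/-- For `b + 2 ≤ a ≤ 2b`, the irreducible characters of `S_{2a}` indexed by
`(a, b+2, 1^{a-b-2})` and by `(a, a-b+1, 1^{b-1})` both vanish at the class
of cycle type `(a, b, a-b-1, 1)`. -/
theorem stmt_16 (a b : ℕ) (h1 : b + 2 ≤ a) (h2 : a ≤ 2 * b) :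
    MN (a :: (b + 2) :: List.replicate (a - b - 2) 1) [a, b, a - b - 1, 1] = 0 ∧
    MN (a :: (a - b + 1) :: List.replicate (b - 1) 1) [a, b, a - b - 1, 1] = 0 := by
  obtain ⟨e, rfl⟩ : ∃ e, a = b + (e + 2) := ⟨a - b - 2, by omega⟩
  obtain ⟨f, rfl⟩ : ∃ f, b = e + f + 2 := ⟨b - e - 2, by omega⟩
  rw [show e + f + 2 + (e + 2) = 2*e+f+4 from by ring]
  rw [show 2*e+f+4 - (e+f+2) - 2 = e from by omega,
      show 2*e+f+4 - (e+f+2) - 1 = e+1 from by omega,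
      show 2*e+f+4 - (e+f+2) + 1 = e+3 from by omega,
      show e+f+2 - 1 = e+f+1 from by omega,
      show e+f+2+2 = e+f+4 from by ring]
  exact ⟨main1 e f, main2 e f⟩
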